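/- Let r, s ≥ 0 be integers with n = 2(r+s) ≥ 1, and let v ∈ (ℤ/4ℤ)^n have type (0, t₁, 0, t₃) (so every coordinate of v is 1 or 3, and t₁ + t₃ = n). Then C(n, 2s) · λ(v) = (−1)^r · C(n; r,s,r,s) · K_{2s}(t₃), where K_{2s} is the binary Krawtchouk polynomial with parameter n. -/

import Mathlib

/-- The number of coordinates of `v ∈ (ℤ/4ℤ)^n` equal to `k`. -/
def typeCount {n : ℕ} (v : Fin n → ZMod 4) (k : ZMod 4) : ℕ :=
  (Finset.univ.filter fun i => v i = k).card

/-- `v ∈ (ℤ/4ℤ)^n` has type `(t₀, t₁, t₂, t₃)`. -/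
def HasType {n : ℕ} (v : Fin n → ZMod 4) (t0 t1 t2 t3 : ℕ) : Prop :=
  typeCount v 0 = t0 ∧ typeCount v 1 = t1 ∧ typeCount v 2 = t2 ∧ typeCount v 3 = t3

instance {n : ℕ} (v : Fin n → ZMod 4) (t0 t1 t2 t3 : ℕ) :
    Decidable (HasType v t0 t1 t2 t3) := by
  unfold HasType; infer_instance

/-- `|S(v, a)|`: the number of vectors `b` of type `(r, s, r, s)` with
`v · b = a` in `ℤ/4ℤ`. -/
def Scard {n : ℕ} (r s : ℕ) (v : Fin n → ZMod 4) (a : ZMod 4) : ℕ :=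
  (Finset.univ.filter fun b : Fin n → ZMod 4 =>
    HasType b r s r s ∧ (∑ i, v i * b i) = a).card

/-- The eigenvalue `λ(v) = |S(v,0)| - |S(v,2)|` of `Cay((ℤ/4ℤ)^n, S)`. -/
def lambdaEV {n : ℕ} (r s : ℕ) (v : Fin n → ZMod 4) : ℤ :=
  (Scard r s v 0 : ℤ) - (Scard r s v 2 : ℤ)

/-- The multinomial coefficient `C(n; r, s, r, s)` (with `n = 2(r+s)`). -/
def multinomRSRS (r s : ℕ) : ℕ :=
  Nat.multinomial Finset.univ ![r, s, r, s]

/-- The binary Krawtchouk polynomial `K_j` with parameter `n`, as a rational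
function: `K_j(x) = Σ_{i=0}^{j} (-1)^i C(x,i) C(n-x, j-i)`. -/
noncomputable def krawQ (n j : ℕ) (x : ℚ) : ℚ :=
  ∑ i ∈ Finset.range (j + 1),
    (-1 : ℚ) ^ i * ((descPochhammer ℚ i).eval x / (i.factorial : ℚ)) *
      ((descPochhammer ℚ (j - i)).eval ((n : ℚ) - x) / ((j - i).factorial : ℚ))


/-! ### Auxiliary machinery for the proof -/

open Finset

/-- The real part of `i^a` for `a : ZMod 4`. -/
def chi : ZMod 4 → ℤ := fun a => if a = 0 then 1 else if a = 2 then -1 else 0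

lemma zmod4_cases : ∀ x : ZMod 4, x = 0 ∨ x = 1 ∨ x = 2 ∨ x = 3 := by decide

lemma chi_eq : ∀ a : ZMod 4,
    chi a = (if a = 0 then (1:ℤ) else 0) - (if a = 2 then 1 else 0) := by decide

lemma lambdaEV_eq_sum {n : ℕ} (r s : ℕ) (v : Fin n → ZMod 4) :
    lambdaEV r s v =
      ∑ b ∈ univ.filter (fun b : Fin n → ZMod 4 => HasType b r s r s),
        chi (∑ i, v i * b i) := by
  simp only [chi_eq]
  rw [Finset.sum_sub_distrib, Finset.sum_boole, Finset.sum_boole,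
    Finset.filter_filter, Finset.filter_filter]
  rfl

lemma chi_two_mul (m : ℕ) : chi ((2 * m : ℕ) : ZMod 4) = (-1 : ℤ) ^ m := by
  rcases Nat.even_or_odd m with ⟨k, hk⟩ | ⟨k, hk⟩
  · subst hk
    rw [show 2 * (k + k) = 4 * k from by ring, Nat.cast_mul, ZMod.natCast_self, zero_mul]
    rw [Even.neg_one_pow ⟨k, rfl⟩]; rfl
  · subst hk
    rw [show 2 * (2 * k + 1) = 4 * k + 2 from by ring, Nat.cast_add, Nat.cast_mul,
      ZMod.natCast_self, zero_mul, zero_add]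
    rw [Odd.neg_one_pow ⟨k, rfl⟩]; rfl

lemma inner_eq {n : ℕ} (r s : ℕ) (v b : Fin n → ZMod 4)
    (hv1 : ∀ i, v i = 1 ∨ v i = 3) (hb : HasType b r s r s) :
    (∑ i, v i * b i) =
      ((2 * (r + ((univ.filter fun i => v i = 3 ∧ (b i = 1 ∨ b i = 3))).card) : ℕ) : ZMod 4) := by
  have h4 : (4 : ZMod 4) = 0 := by decide
  have step1 : (∑ i, v i * b i)
      = (∑ i, b i) + ∑ i, (if v i = 3 then 2 * b i else 0) := by
    rw [← Finset.sum_add_distrib]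
    refine Finset.sum_congr rfl fun i _ => ?_
    rcases hv1 i with h | h <;> rw [h]
    · rw [if_neg (by decide), one_mul, add_zero]
    · rw [if_pos rfl]; ring
  have step2 : (∑ i, b i) = ∑ k : ZMod 4, (typeCount b k) • k := by
    rw [← Finset.sum_fiberwise univ (fun i => b i) (fun i => b i)]
    refine Finset.sum_congr rfl fun k _ => ?_
    calc ∑ i ∈ univ.filter (fun i => b i = k), b i
        = ∑ _i ∈ univ.filter (fun i => b i = k), k :=
          Finset.sum_congr rfl fun i hi2 => (Finset.mem_filter.mp hi2).2
      _ = (typeCount b k) • k := by rw [Finset.sum_const]; rfl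
  have step3 : (∑ i, (if v i = 3 then 2 * b i else 0 : ZMod 4))
      = ((univ.filter fun i => v i = 3 ∧ (b i = 1 ∨ b i = 3)).card) • (2 : ZMod 4) := by
    rw [← Finset.sum_filter]
    have : ∀ i ∈ univ.filter (fun i => v i = 3), (2 : ZMod 4) * b i
        = if (b i = 1 ∨ b i = 3) then (2:ZMod 4) else 0 := by
      intro i _
      rcases zmod4_cases (b i) with h | h | h | h <;> rw [h] <;> decide
    rw [Finset.sum_congr rfl this, Finset.sum_ite, Finset.sum_const_zero, add_zero,
      Finset.sum_const, Finset.filter_filter]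
  obtain ⟨h0, h1, h2, h3⟩ := hb
  rw [step1, step2, step3]
  rw [show (univ : Finset (ZMod 4)) = {0, 1, 2, 3} from by decide]
  rw [Finset.sum_insert (by decide), Finset.sum_insert (by decide),
    Finset.sum_insert (by decide), Finset.sum_singleton]
  rw [h0, h1, h2, h3]
  set q := ((univ.filter fun i => v i = 3 ∧ (b i = 1 ∨ b i = 3)).card)
  simp only [nsmul_eq_mul]
  push_cast
  linear_combination (s : ZMod 4) * h4

section SumO
variable {n : ℕ}

lemma sum_O (m : ℕ) (R : Finset (Fin n)) :
    ∑ O ∈ (univ : Finset (Fin n)).powersetCard m, (-1:ℚ) ^ (O ∩ R).card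
    = ∑ q ∈ Finset.range (m+1),
        (-1:ℚ)^q * (R.card.choose q : ℚ) * ((Rᶜ.card).choose (m - q) : ℚ) := by
  have key : ∑ O ∈ (univ : Finset (Fin n)).powersetCard m, (-1:ℚ) ^ (O ∩ R).card
      = ∑ σ ∈ (Finset.range (m+1)).sigma
          (fun q => (R.powersetCard q) ×ˢ (Rᶜ.powersetCard (m - q))),
          (-1:ℚ) ^ σ.1 := by
    refine Finset.sum_nbij' (fun O => ⟨(O ∩ R).card, (O ∩ R, O \ R)⟩)
      (fun σ => σ.2.1 ∪ σ.2.2) ?_ ?_ ?_ ?_ ?_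
    · intro O hO
      rw [Finset.mem_powersetCard] at hO
      obtain ⟨-, hcard⟩ := hO
      have hsplit := Finset.card_inter_add_card_sdiff O R
      rw [Finset.mem_sigma, Finset.mem_range, Finset.mem_product,
        Finset.mem_powersetCard, Finset.mem_powersetCard]
      dsimp only
      refine ⟨by omega, ⟨Finset.inter_subset_right, rfl⟩, ⟨?_, by omega⟩⟩
      intro x hx
      rw [Finset.mem_sdiff] at hx
      exact Finset.mem_compl.mpr hx.2
    · rintro ⟨q, A, B⟩ hσ
      rw [Finset.mem_sigma, Finset.mem_range, Finset.mem_product,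
        Finset.mem_powersetCard, Finset.mem_powersetCard] at hσ
      obtain ⟨hq, ⟨hAR, hA⟩, ⟨hBR, hB⟩⟩ := hσ
      rw [Finset.mem_powersetCard]
      refine ⟨Finset.subset_univ _, ?_⟩
      rw [Finset.card_union_of_disjoint, hA, hB]
      · omega
      · rw [Finset.disjoint_left]
        intro a haA haB
        exact (Finset.mem_compl.mp (hBR haB)) (hAR haA)
    · intro O _
      ext x
      simp only [Finset.mem_union, Finset.mem_inter, Finset.mem_sdiff]
      tauto
    · rintro ⟨q, A, B⟩ hσ
      rw [Finset.mem_sigma, Finset.mem_range, Finset.mem_product,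
        Finset.mem_powersetCard, Finset.mem_powersetCard] at hσ
      obtain ⟨hq, ⟨hAR, hA⟩, ⟨hBR, hB⟩⟩ := hσ
      have hBR' : ∀ x ∈ B, x ∉ R := fun x hx => Finset.mem_compl.mp (hBR hx)
      have e1 : (A ∪ B) ∩ R = A := by
        ext x
        simp only [Finset.mem_inter, Finset.mem_union]
        constructor
        · rintro ⟨h1 | h1, h2⟩
          · exact h1
          · exact absurd h2 (hBR' x h1)
        · intro h; exact ⟨Or.inl h, hAR h⟩
      have e2 : (A ∪ B) \ R = B := by
        ext x
        simp only [Finset.mem_sdiff, Finset.mem_union]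
        constructor
        · rintro ⟨h1 | h1, h2⟩
          · exact absurd (hAR h1) h2
          · exact h1
        · intro h; exact ⟨Or.inr h, hBR' x h⟩
      dsimp only
      rw [e1, e2, hA]
    · intro O _
      rfl
  rw [key, Finset.sum_sigma]
  refine Finset.sum_congr rfl fun q _ => ?_
  dsimp only
  rw [Finset.sum_const, Finset.card_product, Finset.card_powersetCard,
    Finset.card_powersetCard, nsmul_eq_mul]
  push_cast
  ring

end SumO

section Recon
variable {n : ℕ}

lemma recon (O U Z : Finset (Fin n)) (hUO : U ⊆ O) (hZO : Z ⊆ Oᶜ)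
    (b : Fin n → ZMod 4)
    (hb : ∀ idx, b idx =
      if idx ∈ U then 1 else if idx ∈ O then 3 else if idx ∈ Z then 0 else 2) :
    univ.filter (fun i => b i = 1) = U ∧
    univ.filter (fun i => b i = 3) = O \ U ∧
    univ.filter (fun i => b i = 0) = Z ∧
    univ.filter (fun i => b i = 2) = Oᶜ \ Z ∧
    univ.filter (fun i => b i = 1 ∨ b i = 3) = O := by
  have d13 : (1 : ZMod 4) ≠ 3 := by decide
  have d10 : (1 : ZMod 4) ≠ 0 := by decide
  have d12 : (1 : ZMod 4) ≠ 2 := by decide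
  have d31 : (3 : ZMod 4) ≠ 1 := by decide
  have d30 : (3 : ZMod 4) ≠ 0 := by decide
  have d32 : (3 : ZMod 4) ≠ 2 := by decide
  have d01 : (0 : ZMod 4) ≠ 1 := by decide
  have d03 : (0 : ZMod 4) ≠ 3 := by decide
  have d02 : (0 : ZMod 4) ≠ 2 := by decide
  have d21 : (2 : ZMod 4) ≠ 1 := by decide
  have d23 : (2 : ZMod 4) ≠ 3 := by decide
  have d20 : (2 : ZMod 4) ≠ 0 := by decide
  have hxO : ∀ x, x ∈ U → x ∈ O := fun x h => hUO h
  have hxZ : ∀ x, x ∈ Z → x ∉ O := fun x h => Finset.mem_compl.mp (hZO h)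
  refine ⟨?_, ?_, ?_, ?_, ?_⟩ <;>
  · ext x
    simp only [Finset.mem_filter, Finset.mem_univ, true_and, hb x, Finset.mem_sdiff,
      Finset.mem_compl]
    by_cases h1 : x ∈ U <;> by_cases h2 : x ∈ O <;> by_cases h3 : x ∈ Z <;>
      simp [h1, h2, h3, d13, d10, d12, d31, d30, d32, d01, d03, d02, d21, d23, d20] <;>
      tauto

end Recon

section SW
variable {n : ℕ}

lemma sum_weight (r s : ℕ) (hn : n = 2*(r+s)) (v : Fin n → ZMod 4) :
    ∑ b ∈ univ.filter (fun b : Fin n → ZMod 4 => HasType b r s r s),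
        ((-1:ℚ) ^ ((univ.filter fun i => v i = 3 ∧ (b i = 1 ∨ b i = 3)).card))
    = ((2*s).choose s : ℚ) * ((2*r).choose r : ℚ) *
        ∑ O ∈ (univ : Finset (Fin n)).powersetCard (2*s),
          (-1:ℚ) ^ (O ∩ (univ.filter fun i => v i = 3)).card := by
  have d13 : (1 : ZMod 4) ≠ 3 := by decide
  set R : Finset (Fin n) := univ.filter fun i => v i = 3 with hR
  have key : ∑ b ∈ univ.filter (fun b : Fin n → ZMod 4 => HasType b r s r s),
        ((-1:ℚ) ^ ((univ.filter fun i => v i = 3 ∧ (b i = 1 ∨ b i = 3)).card))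
      = ∑ σ ∈ ((univ : Finset (Fin n)).powersetCard (2*s)).sigma
          (fun O => (O.powersetCard s) ×ˢ ((Oᶜ).powersetCard r)),
          (-1:ℚ) ^ (σ.1 ∩ R).card := by
    refine Finset.sum_nbij'
      (fun b => ⟨univ.filter (fun i => b i = 1 ∨ b i = 3),
        (univ.filter (fun i => b i = 1), univ.filter (fun i => b i = 0))⟩)
      (fun σ => fun idx => if idx ∈ σ.2.1 then 1 else if idx ∈ σ.1 then 3
        else if idx ∈ σ.2.2 then 0 else 2) ?_ ?_ ?_ ?_ ?_
    · intro b hb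
      rw [Finset.mem_filter] at hb
      obtain ⟨-, h0, h1, h2, h3⟩ := hb
      have hdisj : Disjoint (univ.filter (fun i => b i = 1)) (univ.filter (fun i => b i = 3)) := by
        rw [Finset.disjoint_left]
        intro a ha hb'
        rw [Finset.mem_filter] at ha hb'
        rw [ha.2] at hb'
        exact d13 hb'.2
      have h1' : (univ.filter (fun i => b i = 1)).card = s := h1
      have h3' : (univ.filter (fun i => b i = 3)).card = s := h3
      have hOcard : (univ.filter (fun i => b i = 1 ∨ b i = 3)).card = 2*s := by
        rw [Finset.filter_or, Finset.card_union_of_disjoint hdisj]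
        omega
      rw [Finset.mem_sigma, Finset.mem_product, Finset.mem_powersetCard,
        Finset.mem_powersetCard, Finset.mem_powersetCard]
      refine ⟨⟨Finset.subset_univ _, hOcard⟩, ⟨?_, h1⟩, ⟨?_, h0⟩⟩
      · intro x hx
        rw [Finset.mem_filter] at hx ⊢
        exact ⟨hx.1, Or.inl hx.2⟩
      · intro x hx
        rw [Finset.mem_filter] at hx
        rw [Finset.mem_compl, Finset.mem_filter]
        rw [hx.2]
        push_neg
        intro
        decide
    · rintro ⟨O, U, Z⟩ hσ
      dsimp only at hσ ⊢
      rw [Finset.mem_sigma, Finset.mem_product, Finset.mem_powersetCard,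
        Finset.mem_powersetCard, Finset.mem_powersetCard] at hσ
      obtain ⟨⟨-, hO⟩, ⟨hUO, hU⟩, ⟨hZO, hZ⟩⟩ := hσ
      obtain ⟨e1, e3, e0, e2, eodd⟩ := recon O U Z hUO hZO _ (fun idx => rfl)
      rw [Finset.mem_filter]
      refine ⟨Finset.mem_univ _, ?_, ?_, ?_, ?_⟩
      · show (univ.filter _).card = r
        rw [e0, hZ]
      · show (univ.filter _).card = s
        rw [e1, hU]
      · show (univ.filter _).card = r
        rw [e2, Finset.card_sdiff_of_subset hZO, Finset.card_compl, Fintype.card_fin, hO, hZ]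
        omega
      · show (univ.filter _).card = s
        rw [e3, Finset.card_sdiff_of_subset hUO, hO, hU]
        omega
    · intro b _
      funext x
      dsimp only
      rcases zmod4_cases (b x) with hx | hx | hx | hx
      · rw [if_neg, if_neg, if_pos, hx]
        · exact Finset.mem_filter.mpr ⟨Finset.mem_univ _, hx⟩
        · rw [Finset.mem_filter, hx]
          push_neg
          intro
          decide
        · rw [Finset.mem_filter, hx]
          push_neg
          intro
          decide
      · rw [if_pos, hx]
        exact Finset.mem_filter.mpr ⟨Finset.mem_univ _, hx⟩
      · rw [if_neg, if_neg, if_neg, hx]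
        · rw [Finset.mem_filter, hx]
          push_neg
          intro
          decide
        · rw [Finset.mem_filter, hx]
          push_neg
          intro
          decide
        · rw [Finset.mem_filter, hx]
          push_neg
          intro
          decide
      · rw [if_neg, if_pos, hx]
        · exact Finset.mem_filter.mpr ⟨Finset.mem_univ _, Or.inr hx⟩
        · rw [Finset.mem_filter, hx]
          push_neg
          intro
          decide
    · rintro ⟨O, U, Z⟩ hσ
      dsimp only at hσ ⊢
      rw [Finset.mem_sigma, Finset.mem_product, Finset.mem_powersetCard,
        Finset.mem_powersetCard, Finset.mem_powersetCard] at hσ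
      obtain ⟨⟨-, hO⟩, ⟨hUO, hU⟩, ⟨hZO, hZ⟩⟩ := hσ
      obtain ⟨e1, e3, e0, e2, eodd⟩ := recon O U Z hUO hZO _ (fun idx => rfl)
      rw [show (⟨O, (U, Z)⟩ :
        (_ : Finset (Fin n)) × Finset (Fin n) × Finset (Fin n)).snd.1 = U from rfl] at *
      rw [eodd, e1, e0]
    · intro b _
      dsimp only
      congr 1
      congr 1
      ext x
      simp only [Finset.mem_filter, Finset.mem_univ, true_and, Finset.mem_inter, hR]
      tauto
  rw [key, Finset.sum_sigma]
  rw [Finset.mul_sum]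
  refine Finset.sum_congr rfl fun O hO => ?_
  rw [Finset.mem_powersetCard] at hO
  dsimp only
  rw [Finset.sum_const, Finset.card_product, Finset.card_powersetCard,
    Finset.card_powersetCard, Finset.card_compl, Fintype.card_fin, hO.2, nsmul_eq_mul,
    show n - 2*s = 2*r from by omega]
  push_cast
  ring

end SW

lemma krawQ_nat {n j t3 t1 : ℕ} (h : t1 + t3 = n) :
    krawQ n j (t3 : ℚ) = ∑ i ∈ Finset.range (j+1),
      (-1:ℚ)^i * (t3.choose i : ℚ) * (t1.choose (j-i) : ℚ) := by
  unfold krawQ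
  refine Finset.sum_congr rfl fun i _ => ?_
  have h1 : ((n:ℚ) - (t3:ℚ)) = (t1 : ℚ) := by
    rw [← h]; push_cast; ring
  rw [h1, descPochhammer_eval_eq_descFactorial, descPochhammer_eval_eq_descFactorial,
    Nat.descFactorial_eq_factorial_mul_choose, Nat.descFactorial_eq_factorial_mul_choose]
  have f1 : (Nat.factorial i : ℚ) ≠ 0 := Nat.cast_ne_zero.mpr (Nat.factorial_ne_zero i)
  have f2 : (Nat.factorial (j-i) : ℚ) ≠ 0 := Nat.cast_ne_zero.mpr (Nat.factorial_ne_zero _)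
  push_cast
  field_simp

lemma choose_prod (r s : ℕ) :
    (((2*(r+s)).choose (2*s) : ℚ)) * ((2*s).choose s : ℚ) * ((2*r).choose r : ℚ)
      = (multinomRSRS r s : ℚ) := by
  have hm := Nat.multinomial_spec (Finset.univ : Finset (Fin 4)) ![r, s, r, s]
  rw [Fin.prod_univ_four, Fin.sum_univ_four] at hm
  simp only [Matrix.cons_val_zero, Matrix.cons_val_one, Matrix.head_cons,
    Matrix.cons_val_two, Matrix.tail_cons, Matrix.cons_val_three] at hm
  have hmQ : ((r.factorial * s.factorial * r.factorial * s.factorial : ℕ) : ℚ)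
      * (multinomRSRS r s : ℚ) = ((r + s + r + s).factorial : ℚ) := by
    rw [← Nat.cast_mul]
    norm_cast
  rw [Nat.cast_choose ℚ (by omega : 2*s ≤ 2*(r+s)),
    Nat.cast_choose ℚ (by omega : s ≤ 2*s),
    Nat.cast_choose ℚ (by omega : r ≤ 2*r),
    show 2*(r+s) - 2*s = 2*r from by omega,
    show 2*s - s = s from by omega, show 2*r - r = r from by omega]
  have e1 : (2*(r+s)) = r + s + r + s := by omega
  rw [e1]
  have fne : ∀ m : ℕ, (m.factorial : ℚ) ≠ 0 :=
    fun m => Nat.cast_ne_zero.mpr (Nat.factorial_ne_zero m)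
  field_simp
  push_cast at hmQ ⊢
  linear_combination (-1 : ℚ) * hmQ

/-- for `v` of type `(0, t₁, 0, t₃)`,
`C(n, 2s)·λ(v) = (-1)^r · C(n; r,s,r,s) · K_{2s}(t₃)`. -/
theorem lambda_of_type_0t10t3 (r s n : ℕ) (hn : n = 2 * (r + s)) (hn1 : 1 ≤ n)
    (v : Fin n → ZMod 4) (t1 t3 : ℕ) (hv : HasType v 0 t1 0 t3) :
    (n.choose (2 * s) : ℚ) * (lambdaEV r s v : ℚ) =
      (-1 : ℚ) ^ r * (multinomRSRS r s : ℚ) * krawQ n (2 * s) (t3 : ℚ) := by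
  obtain ⟨h0, h1, h2, h3⟩ := hv
  have h0' : (Finset.univ.filter fun i => v i = 0) = ∅ := Finset.card_eq_zero.mp h0
  have h2' : (Finset.univ.filter fun i => v i = 2) = ∅ := Finset.card_eq_zero.mp h2
  have hv1 : ∀ i, v i = 1 ∨ v i = 3 := by
    intro i
    rcases zmod4_cases (v i) with h | h | h | h
    · exfalso
      have hmem : i ∈ Finset.univ.filter fun i => v i = 0 :=
        Finset.mem_filter.mpr ⟨Finset.mem_univ _, h⟩
      rw [h0'] at hmem
      exact absurd hmem (Finset.notMem_empty i)
    · exact Or.inl h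
    · exfalso
      have hmem : i ∈ Finset.univ.filter fun i => v i = 2 :=
        Finset.mem_filter.mpr ⟨Finset.mem_univ _, h⟩
      rw [h2'] at hmem
      exact absurd hmem (Finset.notMem_empty i)
    · exact Or.inr h
  have hc3 : (Finset.univ.filter fun i => v i = 3).card = t3 := h3
  have ht : t1 + t3 = n := by
    have hdisj : Disjoint (Finset.univ.filter fun i => v i = 1)
        (Finset.univ.filter fun i => v i = 3) := by
      rw [Finset.disjoint_left]
      intro a ha hb'
      rw [Finset.mem_filter] at ha hb'
      rw [ha.2] at hb'
      exact absurd hb'.2 (by decide)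
    have huniv : (Finset.univ.filter fun i => v i = 1) ∪
        (Finset.univ.filter fun i => v i = 3) = Finset.univ := by
      ext x
      simp only [Finset.mem_union, Finset.mem_filter, Finset.mem_univ, true_and, iff_true]
      exact hv1 x
    have hcu := Finset.card_union_of_disjoint hdisj
    rw [huniv, Finset.card_univ, Fintype.card_fin] at hcu
    have h1'' : (Finset.univ.filter fun i => v i = 1).card = t1 := h1
    omega
  have hc1 : ((Finset.univ.filter fun i => v i = 3)ᶜ).card = t1 := by
    rw [Finset.card_compl, Fintype.card_fin, hc3]
    omega
  have hlam : (lambdaEV r s v : ℚ)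
      = (-1:ℚ)^r * ∑ b ∈ Finset.univ.filter (fun b : Fin n → ZMod 4 => HasType b r s r s),
          ((-1:ℚ) ^ ((Finset.univ.filter fun i => v i = 3 ∧ (b i = 1 ∨ b i = 3)).card)) := by
    rw [lambdaEV_eq_sum r s v]
    push_cast
    rw [Finset.mul_sum]
    refine Finset.sum_congr rfl fun b hb => ?_
    have hbT : HasType b r s r s := (Finset.mem_filter.mp hb).2
    rw [inner_eq r s v b hv1 hbT, chi_two_mul]
    push_cast
    rw [pow_add]
  rw [hlam, sum_weight r s hn v, sum_O (2*s) (Finset.univ.filter fun i => v i = 3)]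
  simp only [hc3, hc1]
  rw [krawQ_nat ht]
  have hcp := choose_prod r s
  rw [← hn] at hcp
  set K := ∑ i ∈ Finset.range (2*s+1),
    (-1:ℚ)^i * (t3.choose i : ℚ) * (t1.choose (2*s-i) : ℚ) with hK
  linear_combination ((-1:ℚ)^r * K) * hcp
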